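/- Let μ be the self-similar measure on ℝ with μ = ½(μ∘S_0^{-1} + μ∘S_{1/2}^{-1}), S_b(x) = x/4 + b, and let Λ = {Σ_{k=1}^n 4^{k-1} ℓ_k : n ≥ 0, ℓ_k ∈ {0,1}} ⊆ ℤ≥0. Then the exponentials {e_ξ : ξ ∈ Λ}, e_ξ(x) = e^{2πi ξ x}, form an orthogonal family in L²(μ): for distinct ξ, ξ' ∈ Λ, ∫ e^{2πi(ξ-ξ')x} dμ(x) = 0. -/

import Mathlib

open MeasureTheory Complex

private lemma exp_integrable (ν : Measure ℝ) [IsFiniteMeasure ν] (s : ℝ) :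
    Integrable (fun x : ℝ => Complex.exp (2 * Real.pi * Complex.I * (s : ℂ) * (x : ℂ))) ν := by
  apply Integrable.mono' (integrable_const (1 : ℝ))
  · exact Continuous.aestronglyMeasurable (by fun_prop)
  · filter_upwards with x
    have h : 2 * (Real.pi : ℂ) * Complex.I * (s : ℂ) * (x : ℂ)
        = ((2 * Real.pi * s * x : ℝ) : ℂ) * Complex.I := by push_cast; ring
    rw [h, Complex.norm_exp_ofReal_mul_I]

private lemma FE (μ : Measure ℝ) [IsProbabilityMeasure μ]
    (hself : μ = (2 : ENNReal)⁻¹ •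
      (Measure.map (fun x : ℝ => x / 4) μ + Measure.map (fun x : ℝ => x / 4 + 1 / 2) μ))
    (t : ℝ) :
    ∫ x : ℝ, Complex.exp (2 * Real.pi * Complex.I * (t : ℂ) * (x : ℂ)) ∂μ
      = (1 + Complex.exp (Real.pi * Complex.I * t)) / 2 *
        ∫ x : ℝ, Complex.exp (2 * Real.pi * Complex.I * ((t / 4 : ℝ) : ℂ) * (x : ℂ)) ∂μ := by
  have hm1 : Measurable (fun x : ℝ => x / 4) := by fun_prop
  have hm2 : Measurable (fun x : ℝ => x / 4 + 1 / 2) := by fun_prop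
  haveI i1 : IsProbabilityMeasure (Measure.map (fun x : ℝ => x / 4) μ) :=
    Measure.isProbabilityMeasure_map hm1.aemeasurable
  haveI i2 : IsProbabilityMeasure (Measure.map (fun x : ℝ => x / 4 + 1 / 2) μ) :=
    Measure.isProbabilityMeasure_map hm2.aemeasurable
  conv_lhs => rw [hself]
  rw [integral_smul_measure, integral_add_measure (exp_integrable _ t) (exp_integrable _ t),
    integral_map hm1.aemeasurable (Continuous.aestronglyMeasurable (by fun_prop)),
    integral_map hm2.aemeasurable (Continuous.aestronglyMeasurable (by fun_prop))]
  have e1 : ∀ x : ℝ, Complex.exp (2 * Real.pi * Complex.I * (t : ℂ) * ((x / 4 : ℝ) : ℂ))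
      = Complex.exp (2 * Real.pi * Complex.I * ((t / 4 : ℝ) : ℂ) * (x : ℂ)) := by
    intro x; congr 1; push_cast; ring
  have e2 : ∀ x : ℝ, Complex.exp (2 * Real.pi * Complex.I * (t : ℂ) * ((x / 4 + 1 / 2 : ℝ) : ℂ))
      = Complex.exp (Real.pi * Complex.I * t) *
        Complex.exp (2 * Real.pi * Complex.I * ((t / 4 : ℝ) : ℂ) * (x : ℂ)) := by
    intro x
    rw [← Complex.exp_add]; congr 1; push_cast; ring
  simp only [e1, e2, integral_const_mul]
  have : ((2 : ENNReal)⁻¹).toReal = (1 / 2 : ℝ) := by simp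
  rw [this, Complex.real_smul]
  push_cast
  ring

private lemma chain (μ : Measure ℝ) [IsProbabilityMeasure μ]
    (hself : μ = (2 : ENNReal)⁻¹ •
      (Measure.map (fun x : ℝ => x / 4) μ + Measure.map (fun x : ℝ => x / 4 + 1 / 2) μ)) :
    ∀ (k : ℕ) (u : ℤ),
      ∫ x : ℝ, Complex.exp (2 * Real.pi * Complex.I * (((4 : ℝ) ^ k * (u : ℝ) : ℝ) : ℂ) * (x : ℂ)) ∂μ
        = ∫ x : ℝ, Complex.exp (2 * Real.pi * Complex.I * (((u : ℝ) : ℝ) : ℂ) * (x : ℂ)) ∂μ := by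
  intro k
  induction k with
  | zero => intro u; norm_num
  | succ k ih =>
    intro u
    rw [FE μ hself ((4 : ℝ) ^ (k + 1) * (u : ℝ))]
    have harg : ((4 : ℝ) ^ (k + 1) * (u : ℝ)) / 4 = (4 : ℝ) ^ k * (u : ℝ) := by ring
    have hexp : Complex.exp (Real.pi * Complex.I * ((4 : ℝ) ^ (k + 1) * (u : ℝ) : ℝ)) = 1 := by
      have : ((Real.pi : ℂ)) * Complex.I * (((4 : ℝ) ^ (k + 1) * (u : ℝ) : ℝ) : ℂ)
          = ((2 * 4 ^ k * u : ℤ) : ℂ) * (2 * Real.pi * Complex.I) := by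
        push_cast; ring
      rw [this, Complex.exp_int_mul_two_pi_mul_I]
    rw [hexp, harg, ih u]
    norm_num

private lemma odd_zero (μ : Measure ℝ) [IsProbabilityMeasure μ]
    (hself : μ = (2 : ENNReal)⁻¹ •
      (Measure.map (fun x : ℝ => x / 4) μ + Measure.map (fun x : ℝ => x / 4 + 1 / 2) μ))
    (u : ℤ) (hu : Odd u) :
    ∫ x : ℝ, Complex.exp (2 * Real.pi * Complex.I * (((u : ℝ) : ℝ) : ℂ) * (x : ℂ)) ∂μ = 0 := by
  rw [FE μ hself ((u : ℝ))]
  obtain ⟨m, hm⟩ := hu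
  have hexp : Complex.exp (Real.pi * Complex.I * ((u : ℝ) : ℝ)) = -1 := by
    have : ((Real.pi : ℂ)) * Complex.I * (((u : ℝ) : ℝ) : ℂ)
        = ((m : ℂ)) * (2 * Real.pi * Complex.I) + Real.pi * Complex.I := by
      rw [hm]; push_cast; ring
    rw [this, Complex.exp_add, Complex.exp_int_mul_two_pi_mul_I, Complex.exp_pi_mul_I]
    ring
  rw [hexp]
  norm_num

private lemma digit_sum_factor : ∀ (N : ℕ) (d : ℕ → ℤ),
    (∀ k, d k = -1 ∨ d k = 0 ∨ d k = 1) →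
    (∑ k ∈ Finset.range N, 4 ^ k * d k) ≠ 0 →
    ∃ (k : ℕ) (u : ℤ), Odd u ∧ (∑ k ∈ Finset.range N, 4 ^ k * d k) = 4 ^ k * u := by
  intro N
  induction N with
  | zero => intro d _ h; simp at h
  | succ N ih =>
    intro d hd h
    have hterm : ∀ i : ℕ, (4:ℤ) ^ (i+1) * d (i+1) = 4 * (4 ^ i * d (i+1)) := by
      intro i; ring
    have hsplit : (∑ k ∈ Finset.range (N + 1), 4 ^ k * d k)
        = 4 * (∑ k ∈ Finset.range N, 4 ^ k * d (k + 1)) + d 0 := by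
      rw [Finset.sum_range_succ', pow_zero, one_mul]
      simp only [hterm, ← Finset.mul_sum]
    set s := ∑ k ∈ Finset.range N, 4 ^ k * d (k + 1) with hs
    rcases hd 0 with h0 | h0 | h0
    · refine ⟨0, 4 * s + d 0, ⟨2 * s - 1, by rw [h0]; ring⟩, ?_⟩
      rw [hsplit, pow_zero, one_mul]
    · have hne : s ≠ 0 := by
        intro hz; apply h; rw [hsplit, hz, h0]; ring
      obtain ⟨k, u, hu, heq⟩ := ih (fun k => d (k + 1)) (fun k => hd (k + 1)) hne
      refine ⟨k + 1, u, hu, ?_⟩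
      rw [hsplit, h0, hs, heq]; ring
    · refine ⟨0, 4 * s + d 0, ⟨2 * s, by rw [h0]; ring⟩, ?_⟩
      rw [hsplit, pow_zero, one_mul]

/-- The spectrum `Λ = {∑ 4^{k-1} ℓ_k : ℓ_k ∈ {0,1}}` of finite base-4 expansions
with digits 0 and 1. -/
def LambdaSet : Set ℤ :=
  {x | ∃ (n : ℕ) (l : Fin n → Fin 2), x = ∑ k : Fin n, 4 ^ (k : ℕ) * ((l k : ℕ) : ℤ)}

private lemma lambda_sum (x : ℤ) (hx : x ∈ LambdaSet) :
    ∃ (n : ℕ) (L : ℕ → ℤ), (∀ k, L k = 0 ∨ L k = 1) ∧ (∀ k, n ≤ k → L k = 0) ∧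
      x = ∑ k ∈ Finset.range n, 4 ^ k * L k := by
  obtain ⟨n, l, rfl⟩ := hx
  refine ⟨n, fun k => if h : k < n then ((l ⟨k, h⟩ : ℕ) : ℤ) else 0, ?_, ?_, ?_⟩
  · intro k
    by_cases h : k < n
    · simp only [dif_pos h]
      have h2 : ((l ⟨k, h⟩ : ℕ)) < 2 := (l ⟨k, h⟩).isLt
      omega
    · simp [dif_neg h]
  · intro k hk; simp [Nat.not_lt.mpr hk]
  · rw [← Fin.sum_univ_eq_sum_range]
    apply Finset.sum_congr rfl
    intro i _
    simp [i.isLt]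

private lemma diff_factor (x y : ℤ) (hx : x ∈ LambdaSet) (hy : y ∈ LambdaSet) (hne : x ≠ y) :
    ∃ (k : ℕ) (u : ℤ), Odd u ∧ x - y = 4 ^ k * u := by
  obtain ⟨n, L, hL01, hLz, rfl⟩ := lambda_sum x hx
  obtain ⟨m, M, hM01, hMz, rfl⟩ := lambda_sum y hy
  set N := max n m with hN
  have hxe : ∑ k ∈ Finset.range n, 4 ^ k * L k = ∑ k ∈ Finset.range N, 4 ^ k * L k := by
    apply Finset.sum_subset (Finset.range_subset_range.2 (le_max_left n m))
    intro i _ hi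
    rw [hLz i (by simpa using hi)]; ring
  have hye : ∑ k ∈ Finset.range m, 4 ^ k * M k = ∑ k ∈ Finset.range N, 4 ^ k * M k := by
    apply Finset.sum_subset (Finset.range_subset_range.2 (le_max_right n m))
    intro i _ hi
    rw [hMz i (by simpa using hi)]; ring
  have hdiff : (∑ k ∈ Finset.range n, 4 ^ k * L k) - ∑ k ∈ Finset.range m, 4 ^ k * M k
      = ∑ k ∈ Finset.range N, 4 ^ k * (L k - M k) := by
    rw [hxe, hye, ← Finset.sum_sub_distrib]
    apply Finset.sum_congr rfl
    intro i _; ring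
  rw [hdiff]
  apply digit_sum_factor
  · intro k; rcases hL01 k with h1 | h1 <;> rcases hM01 k with h2 | h2 <;> omega
  · rw [← hdiff]; exact sub_ne_zero_of_ne hne

/-- The exponentials `{e_ξ : ξ ∈ Λ}` are orthogonal in `L²(μ)` for the middle-quarter
Cantor measure. -/
theorem stmt11 (μ : Measure ℝ) (hprob : IsProbabilityMeasure μ)
    (hself : μ = (2 : ENNReal)⁻¹ •
      (Measure.map (fun x : ℝ => x / 4) μ + Measure.map (fun x : ℝ => x / 4 + 1 / 2) μ)) :
    ∀ ξ ∈ LambdaSet, ∀ ξ' ∈ LambdaSet, ξ ≠ ξ' →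
      ∫ x : ℝ, Complex.exp (2 * Real.pi * Complex.I * ((ξ : ℂ) - (ξ' : ℂ)) * (x : ℂ)) ∂μ
        = 0 := by
  intro ξ hξ ξ' hξ' hne
  obtain ⟨k, u, hu, heq⟩ := diff_factor ξ ξ' hξ hξ' hne
  have hcast : ((ξ : ℂ) - (ξ' : ℂ)) = (((4 : ℝ) ^ k * (u : ℝ) : ℝ) : ℂ) := by
    have h1 : ((ξ - ξ' : ℤ) : ℂ) = (((4 : ℝ) ^ k * (u : ℝ) : ℝ) : ℂ) := by
      rw [heq]; push_cast; ring
    push_cast at h1 ⊢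
    linear_combination h1
  simp only [hcast]
  rw [chain μ hself k u, odd_zero μ hself u hu]
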